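/- Assume v ≤ v₀ and |θ₀ − m| ≤ δ₀, where v₀ > 0 and δ₀ ≥ 0 are known prior bounds. Then for every α > 0 and every ε ∈ (0,1), with probability at least 1 − 2ε, |θ̂_α(θ₀) − m| ≤ α v₀ / 2 + log(ε⁻¹)/(n α) + (α² δ₀ / 2)(1 + α δ₀)(δ₀²/3 + v₀). -/

import Mathlib

set_option maxHeartbeats 1000000

open MeasureTheory ProbabilityTheory

/-- The threshold function `T(x) = (1/2) log ((1 + x + x²/2)/(1 - x + x²/2))`. -/
noncomputable def threshT (x : ℝ) : ℝ :=
  (1 / 2) * Real.log ((1 + x + x ^ 2 / 2) / (1 - x + x ^ 2 / 2))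

/-- The truncated mean estimator
`θ̂_α(θ₀) = θ₀ + (1/(n α)) ∑ᵢ T (α (Yᵢ - θ₀))` computed on a sample `Y : Fin n → ℝ`. -/
noncomputable def thetaHat (n : ℕ) (α θ₀ : ℝ) (Y : Fin n → ℝ) : ℝ :=
  θ₀ + (1 / (n * α)) * ∑ i, threshT (α * (Y i - θ₀))

section Aux


lemma argpos (x r : ℝ) (hr : 0 ≤ r) : 0 < 1 + x + r + x^2/2 := by nlinarith [sq_nonneg (x+1)]

lemma claimC (t r : ℝ) (hr : 0 ≤ r) :
    Real.log (1 + t + r + t^2/2) - t ≤ r + (1+|t|)*(r*|t| + |t|^3/6) := by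
  rcases le_or_gt 0 t with ht | ht
  · -- t ≥ 0 case
    rw [abs_of_nonneg ht]
    have hy0 : 0 ≤ t + r*t + t^3/6 := by positivity
    have hexp : 1 + (t + r*t + t^3/6) + (t + r*t + t^3/6)^2/2 ≤ Real.exp (t + r*t + t^3/6) := by
      have := Real.sum_le_exp_of_nonneg hy0 3
      norm_num [Finset.sum_range_succ] at this
      linarith
    have hkey : 1 + t + r + t^2/2 ≤ (1+r) * Real.exp (t + r*t + t^3/6) := by
      have h2 : (1+r)*(1 + (t + r*t + t^3/6) + (t + r*t + t^3/6)^2/2)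
          ≤ (1+r)*Real.exp (t + r*t + t^3/6) :=
        mul_le_mul_of_nonneg_left hexp (by linarith)
      refine le_trans ?_ h2
      nlinarith [sq_nonneg t, mul_nonneg hr ht, sq_nonneg (t + r*t + t^3/6),
        mul_nonneg (mul_nonneg hr ht) ht, mul_nonneg (mul_nonneg ht ht) ht,
        sq_nonneg (t + r*t + t^3/6 - t)]
    have hlog := Real.log_le_log (argpos t r hr) hkey
    rw [Real.log_mul (by positivity) (Real.exp_pos _).ne', Real.log_exp] at hlog
    have hlr : Real.log (1+r) ≤ r := by
      have := Real.log_le_sub_one_of_pos (show (0:ℝ) < 1 + r by linarith)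
      linarith
    nlinarith [mul_nonneg hr ht, mul_nonneg (mul_nonneg ht hr) ht,
      mul_nonneg (mul_nonneg (mul_nonneg ht ht) ht) ht]
  · -- t < 0 case
    have ha0 : 0 < -t := by linarith
    rw [abs_of_neg ht]
    have hA : ∀ x : ℝ, 0 < 1 - x + r + x^2/2 := by
      intro x; nlinarith [sq_nonneg (x-1)]
    set g : ℝ → ℝ := fun a => r - a + (1+a)*(r*a + a^3/6) - Real.log (1 - a + r + a^2/2) with hg
    have hder : ∀ x : ℝ, HasDerivAt g
        (-1 + ((r*x + x^3/6) + (1+x)*(r + x^2/2)) - (-1 + x)/(1 - x + r + x^2/2)) x := by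
      intro x
      have hsq : HasDerivAt (fun a : ℝ => a^2) (2*x) x := by simpa using (hasDerivAt_pow 2 x)
      have hcube : HasDerivAt (fun a : ℝ => a^3) (3*x^2) x := by simpa using (hasDerivAt_pow 3 x)
      have hA' : HasDerivAt (fun a : ℝ => 1 - a + r + a^2/2) (-1 + x) x := by
        have := (((hasDerivAt_const x (1:ℝ)).sub (hasDerivAt_id x)).add_const r).add
          (hsq.div_const 2)
        exact this.congr_deriv (by ring)
      have hlog' : HasDerivAt (fun a : ℝ => Real.log (1 - a + r + a^2/2))
          ((-1 + x)/(1 - x + r + x^2/2)) x := hA'.log (hA x).ne'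
      have hP2 : HasDerivAt (fun a : ℝ => r*a + a^3/6) (r + x^2/2) x := by
        have := ((hasDerivAt_id x).const_mul r).add (hcube.div_const 6)
        exact this.congr_deriv (by ring)
      have hP : HasDerivAt (fun a : ℝ => (1+a)*(r*a + a^3/6))
          ((1)*(r*x + x^3/6) + (1+x)*(r + x^2/2)) x := by
        have := (((hasDerivAt_const x (1:ℝ)).add (hasDerivAt_id x))).mul hP2
        exact this.congr_deriv (by simp only [Pi.add_apply, id_eq]; ring)
      have := (((hasDerivAt_const x r).sub (hasDerivAt_id x)).add hP).sub hlog'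
      exact this.congr_deriv (by ring)
    have hmono : MonotoneOn g (Set.Ici (0:ℝ)) := by
      apply monotoneOn_of_deriv_nonneg (convex_Ici 0)
      · exact fun x _ => ((hder x).continuousAt).continuousWithinAt
      · exact fun x _ => ((hder x).differentiableAt).differentiableWithinAt
      · intro x hx
        rw [interior_Ici] at hx
        rw [(hder x).deriv]
        have hxpos : (0:ℝ) < x := hx
        have hAx := hA x
        have key : 0 ≤ (-1 + (r*x + x^3/6 + (1+x)*(r + x^2/2))) * (1 - x + r + x^2/2) + (1 - x) := by
          nlinarith [sq_nonneg x, sq_nonneg r, sq_nonneg (x-1), sq_nonneg (x*r),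
            sq_nonneg (x^2 - x), mul_nonneg hxpos.le hr, sq_nonneg (x^2/2 - x + r),
            mul_nonneg (mul_nonneg hxpos.le hxpos.le) hr,
            mul_nonneg (mul_nonneg hxpos.le hr) hr, sq_nonneg (x^3)]
        have h2 : (-1 + x)/(1 - x + r + x^2/2) ≤ -1 + (r*x + x^3/6 + (1+x)*(r + x^2/2)) := by
          rw [div_le_iff₀ hAx]
          nlinarith [key]
        linarith
    have hga : g 0 ≤ g (-t) := hmono (by simp) (by simp [ha0.le]) ha0.le
    have h0 : (0:ℝ) ≤ g 0 := by
      have hl : Real.log (1 + r) ≤ r := by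
        have := Real.log_le_sub_one_of_pos (show (0:ℝ) < 1 + r by linarith)
        linarith
      have hg0 : g 0 = r - Real.log (1 + r) := by
        simp only [hg]; norm_num
      rw [hg0]; linarith
    have hfin : 0 ≤ g (-t) := le_trans h0 hga
    simp only [hg] at hfin
    have harg : 1 + t + r + t^2/2 = 1 - (-t) + r + (-t)^2/2 := by ring
    rw [harg]
    linarith

lemma mono2 (b D r γ : ℝ) (hb : 0 ≤ b) (hbD : b ≤ D) (hr : 0 ≤ r) (hrγ : r ≤ γ) :
    r + (1+b)*(r*b+b^3/6) ≤ γ + (1+D)*(γ*D+D^3/6) := by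
  have hD : 0 ≤ D := hb.trans hbD
  have hγ : 0 ≤ γ := hr.trans hrγ
  have h1 : r*b ≤ γ*D := mul_le_mul hrγ hbD hb hγ
  have h2 : b^3 ≤ D^3 := pow_le_pow_left₀ hb hbD 3
  have h3 : (1+b)*(r*b+b^3/6) ≤ (1+D)*(γ*D+D^3/6) :=
    mul_le_mul (by linarith) (by linarith) (by positivity) (by linarith)
  linarith

lemma finalBound (α δ₀ v₀ v t : ℝ) (hα : 0 < α) (hδ₀ : 0 ≤ δ₀) (hv : 0 ≤ v)
    (hvle : v ≤ v₀) (ht : |t| ≤ α*δ₀) :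
    Real.log (1 + t + α^2*v/2 + t^2/2) - t ≤
      α*(α*v₀/2 + α^2*δ₀/2*(1+α*δ₀)*(δ₀^2/3+v₀)) := by
  have h := claimC t (α^2*v/2) (by positivity)
  refine h.trans ?_
  have h2 := mono2 |t| (α*δ₀) (α^2*v/2) (α^2*v₀/2) (abs_nonneg t) ht (by positivity)
    (by nlinarith [sq_nonneg α])
  refine h2.trans (le_of_eq ?_)
  ring



lemma den_pos (x : ℝ) : 0 < 1 - x + x ^ 2 / 2 := by nlinarith [sq_nonneg (x-1)]
lemma num_pos (x : ℝ) : 0 < 1 + x + x ^ 2 / 2 := by nlinarith [sq_nonneg (x+1)]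

lemma log_sum_nonneg (x : ℝ) :
    0 ≤ Real.log (1 + x + x ^ 2 / 2) + Real.log (1 - x + x ^ 2 / 2) := by
  rw [← Real.log_mul (num_pos x).ne' (den_pos x).ne']
  exact Real.log_nonneg (by nlinarith [sq_nonneg (x^2)])

lemma threshT_eq (x : ℝ) :
    threshT x = (1/2) * (Real.log (1 + x + x ^ 2 / 2) - Real.log (1 - x + x ^ 2 / 2)) := by
  rw [threshT, Real.log_div (num_pos x).ne' (den_pos x).ne']

lemma exp_threshT_le (x : ℝ) : Real.exp (threshT x) ≤ 1 + x + x ^ 2 / 2 := by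
  have h1 : threshT x ≤ Real.log (1 + x + x ^ 2 / 2) := by
    rw [threshT_eq]; linarith [log_sum_nonneg x]
  calc Real.exp (threshT x) ≤ Real.exp (Real.log (1 + x + x ^ 2 / 2)) := Real.exp_le_exp.mpr h1
    _ = 1 + x + x ^ 2 / 2 := Real.exp_log (num_pos x)

lemma exp_neg_threshT_le (x : ℝ) : Real.exp (-threshT x) ≤ 1 - x + x ^ 2 / 2 := by
  have h1 : -threshT x ≤ Real.log (1 - x + x ^ 2 / 2) := by
    rw [threshT_eq]; linarith [log_sum_nonneg x]
  calc Real.exp (-threshT x) ≤ Real.exp (Real.log (1 - x + x ^ 2 / 2)) := Real.exp_le_exp.mpr h1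
    _ = 1 - x + x ^ 2 / 2 := Real.exp_log (den_pos x)

lemma exp_two_gt_six : (6:ℝ) < Real.exp 2 := by
  have h := Real.exp_one_gt_d9
  have : Real.exp 2 = Real.exp 1 * Real.exp 1 := by
    rw [← Real.exp_add]; norm_num
  nlinarith

lemma abs_threshT_le (x : ℝ) : |threshT x| ≤ 1 := by
  have hr : 0 < (1 + x + x ^ 2 / 2) / (1 - x + x ^ 2 / 2) := div_pos (num_pos x) (den_pos x)
  have hub : (1 + x + x ^ 2 / 2) / (1 - x + x ^ 2 / 2) ≤ 6 := by
    rw [div_le_iff₀ (den_pos x)]; nlinarith [sq_nonneg (5*x-7)]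
  have hlb : Real.exp (-2) ≤ (1 + x + x ^ 2 / 2) / (1 - x + x ^ 2 / 2) := by
    rw [le_div_iff₀ (den_pos x)]
    have h1 : Real.exp (-2) ≤ 1/6 := by
      have h2 : (Real.exp 2)⁻¹ ≤ (6:ℝ)⁻¹ :=
        inv_anti₀ (by norm_num) exp_two_gt_six.le
      rw [Real.exp_neg]
      simpa using h2
    nlinarith [sq_nonneg (5*x+7), den_pos x]
  rw [abs_le, threshT]
  constructor
  · have := Real.log_le_log (Real.exp_pos (-2)) hlb
    rw [Real.log_exp] at this
    linarith
  · have := Real.log_le_log hr (hub.trans exp_two_gt_six.le)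
    rw [Real.log_exp] at this
    linarith

lemma threshT_continuous : Continuous threshT := by
  have h1 : Continuous fun x : ℝ => (1 + x + x ^ 2 / 2) / (1 - x + x ^ 2 / 2) :=
    Continuous.div (by continuity) (by continuity) (fun x => (den_pos x).ne')
  exact continuous_const.mul (h1.log fun x => (div_pos (num_pos x) (den_pos x)).ne')


lemma chernoff_aux {Ω : Type*} [MeasurableSpace Ω] (P : Measure Ω) [IsProbabilityMeasure P]
    (n : ℕ) (X : Fin n → Ω → ℝ) (hmeas : ∀ i, Measurable (X i))
    (hbdd : ∀ i ω, |X i ω| ≤ 1)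
    (hindep : iIndepFun X P)
    (R : ℝ) (hR : 0 < R) (hmgf : ∀ i, ∫ ω, Real.exp (X i ω) ∂P ≤ R)
    (ε : ℝ) (hε : 0 < ε) :
    P {ω | (n : ℝ) * Real.log R + Real.log ε⁻¹ ≤ ∑ i, X i ω} ≤ ENNReal.ofReal ε := by
  set c : ℝ := (n : ℝ) * Real.log R + Real.log ε⁻¹ with hc
  have hint : ∀ i, Integrable (fun ω => Real.exp (1 * X i ω)) P := by
    intro i
    refine Integrable.mono' (integrable_const (Real.exp 1))
      (((hmeas i).const_mul 1).exp.aestronglyMeasurable) ?_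
    filter_upwards with ω
    rw [Real.norm_eq_abs, abs_of_pos (Real.exp_pos _)]
    exact Real.exp_le_exp.mpr (by simpa using (abs_le.mp (hbdd i ω)).2)
  have hSmeas : Measurable fun ω => ∑ i, X i ω :=
    Finset.measurable_sum _ (fun i _ => hmeas i)
  have hintS : Integrable (fun ω => Real.exp (1 * ∑ i, X i ω)) P := by
    refine Integrable.mono' (integrable_const (Real.exp n))
      ((hSmeas.const_mul 1).exp.aestronglyMeasurable) ?_
    filter_upwards with ω
    rw [Real.norm_eq_abs, abs_of_pos (Real.exp_pos _)]
    apply Real.exp_le_exp.mpr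
    rw [one_mul]
    calc ∑ i, X i ω ≤ ∑ _i : Fin n, (1:ℝ) :=
          Finset.sum_le_sum (fun i _ => (abs_le.mp (hbdd i ω)).2)
      _ = n := by simp
  have hsum_eq : (∑ i, X i) = fun ω => ∑ i, X i ω := by
    funext ω; simp
  have hmgfs : mgf (fun ω => ∑ i, X i ω) P 1 = ∏ i, mgf (X i) P 1 := by
    rw [← hsum_eq]; exact hindep.mgf_sum hmeas Finset.univ
  have hmgf_le : mgf (fun ω => ∑ i, X i ω) P 1 ≤ R ^ n := by
    rw [hmgfs]
    calc ∏ i, mgf (X i) P 1 ≤ ∏ _i : Fin n, R := by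
          refine Finset.prod_le_prod (fun i _ => mgf_nonneg) (fun i _ => ?_)
          rw [mgf]
          simpa using hmgf i
      _ = R ^ n := by simp
  have hMark := measure_ge_le_exp_mul_mgf (μ := P) (X := fun ω => ∑ i, X i ω)
    c zero_le_one hintS
  have hfin : Real.exp (-1 * c) * mgf (fun ω => ∑ i, X i ω) P 1 ≤ ε := by
    have h1 : Real.exp (-1 * c) * mgf (fun ω => ∑ i, X i ω) P 1
        ≤ Real.exp (-1 * c) * R ^ n :=
      mul_le_mul_of_nonneg_left hmgf_le (Real.exp_pos _).le
    refine h1.trans (le_of_eq ?_)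
    have e1 : Real.exp (-1 * c) = (R ^ n)⁻¹ * ε := by
      rw [neg_one_mul, hc, neg_add, Real.exp_add, Real.exp_neg, Real.exp_nat_mul,
        Real.exp_log hR, Real.log_inv, neg_neg, Real.exp_log hε]
    rw [e1]
    field_simp
  rw [ENNReal.le_ofReal_iff_toReal_le (measure_ne_top P _) hε.le]
  exact hMark.trans hfin


lemma integral_quad (μ : Measure ℝ) [IsProbabilityMeasure μ]
    (hL2 : Integrable (fun y => y ^ 2) μ) (m v θ₀ c β : ℝ)
    (hm : m = ∫ y, y ∂μ) (hv : v = ∫ y, (y - m) ^ 2 ∂μ) :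
    Integrable (fun y => 1 + c * (y - θ₀) + β * (y - θ₀) ^ 2) μ ∧
    ∫ y, (1 + c * (y - θ₀) + β * (y - θ₀) ^ 2) ∂μ
      = 1 + c * (m - θ₀) + β * (v + (m - θ₀) ^ 2) := by
  have hy_int : Integrable (fun y => y) μ := by
    have hg : Integrable (fun y : ℝ => 1 + y ^ 2) μ := (integrable_const 1).add hL2
    refine Integrable.mono' hg measurable_id.aestronglyMeasurable ?_
    filter_upwards with y
    simp only [Real.norm_eq_abs, id_eq]
    first
    | nlinarith [sq_nonneg (|y| - 1), sq_abs y, abs_nonneg y]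
    | (rw [abs_of_pos (show (0:ℝ) < 1 + y ^ 2 by positivity)]
       nlinarith [sq_nonneg (|y| - 1), sq_abs y, abs_nonneg y])
  have hsq_int : ∀ a : ℝ, Integrable (fun y => (y - a) ^ 2) μ := by
    intro a
    have h : (fun y : ℝ => (y - a) ^ 2) = fun y => (y ^ 2 - (2 * a) * y) + a ^ 2 := by
      funext y; ring
    rw [h]
    exact (hL2.sub (hy_int.const_mul _)).add (integrable_const _)
  have hsub_int : ∀ a : ℝ, Integrable (fun y => y - a) μ :=
    fun a => hy_int.sub (integrable_const a)
  have hint_sub : ∀ a : ℝ, ∫ y, (y - a) ∂μ = m - a := by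
    intro a
    rw [integral_sub hy_int (integrable_const a), integral_const]
    simp [← hm]
  have hint2 : ∫ y, (y - θ₀) ^ 2 ∂μ = v + (m - θ₀) ^ 2 := by
    have hexp : (fun y : ℝ => (y - θ₀) ^ 2)
        = fun y => ((y - m) ^ 2 + (2 * (m - θ₀)) * (y - m)) + (m - θ₀) ^ 2 := by
      funext y; ring
    have hI1 : Integrable (fun y => (y - m) ^ 2 + (2 * (m - θ₀)) * (y - m)) μ :=
      (hsq_int m).add ((hsub_int m).const_mul _)
    rw [hexp, integral_add hI1 (integrable_const _),
      integral_add (hsq_int m) ((hsub_int m).const_mul _), integral_const_mul, hint_sub,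
      integral_const, ← hv]
    simp
  have hI2 : Integrable (fun y => 1 + c * (y - θ₀)) μ :=
    (integrable_const 1).add ((hsub_int θ₀).const_mul c)
  refine ⟨hI2.add ((hsq_int θ₀).const_mul β), ?_⟩
  rw [integral_add hI2 ((hsq_int θ₀).const_mul β),
    integral_add (integrable_const 1) ((hsub_int θ₀).const_mul c),
    integral_const, integral_const_mul, integral_const_mul, hint_sub, hint2]
  simp

end Aux

/-- Proposition 1.1: if `v ≤ v₀` and `|θ₀ - m| ≤ δ₀`, then for every `α > 0` and
`ε ∈ (0,1)`, with probability at least `1 - 2ε`,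
`|θ̂_α(θ₀) - m| ≤ α v₀/2 + log (ε⁻¹)/(n α) + (α² δ₀/2)(1 + α δ₀)(δ₀²/3 + v₀)`. -/
theorem truncated_mean_deviation
    {Ω : Type*} [MeasurableSpace Ω] (P : Measure Ω) [IsProbabilityMeasure P]
    (n : ℕ) (hn : 0 < n) (Y : Fin n → Ω → ℝ) (hYmeas : ∀ i, Measurable (Y i))
    (μ : Measure ℝ) [IsProbabilityMeasure μ]
    (hindep : iIndepFun Y P)
    (hid : ∀ i, Measure.map (Y i) P = μ)
    (hL2 : Integrable (fun y => y ^ 2) μ)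
    (m v : ℝ) (hm : m = ∫ y, y ∂μ) (hv : v = ∫ y, (y - m) ^ 2 ∂μ)
    (v₀ δ₀ : ℝ) (hv₀ : 0 < v₀) (hδ₀ : 0 ≤ δ₀) (hvle : v ≤ v₀)
    (θ₀ : ℝ) (hθ₀ : |θ₀ - m| ≤ δ₀)
    (α : ℝ) (hα : 0 < α) (ε : ℝ) (hε : ε ∈ Set.Ioo (0 : ℝ) 1) :
    ENNReal.ofReal (1 - 2 * ε) ≤
      P {ω | |thetaHat n α θ₀ (fun i => Y i ω) - m| ≤
        α * v₀ / 2 + Real.log ε⁻¹ / (n * α) +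
          α ^ 2 * δ₀ / 2 * (1 + α * δ₀) * (δ₀ ^ 2 / 3 + v₀)} := by
  obtain ⟨hε0, hε1⟩ := hε
  rcases le_or_gt (1/2 : ℝ) ε with hhalf | hhalf
  · rw [ENNReal.ofReal_eq_zero.mpr (by linarith)]
    exact bot_le
  have hN : (0:ℝ) < n := Nat.cast_pos.mpr hn
  have hNα : (0:ℝ) < (n:ℝ) * α := mul_pos hN hα
  have hv0 : 0 ≤ v := hv ▸ integral_nonneg (fun y => sq_nonneg _)
  -- abbreviations
  set t : ℝ := α * (m - θ₀) with htdef
  have hts : |t| ≤ α * δ₀ := by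
    rw [htdef, abs_mul, abs_of_pos hα]
    exact mul_le_mul_of_nonneg_left (abs_sub_comm θ₀ m ▸ hθ₀) hα.le
  set C₀ : ℝ := α ^ 2 * δ₀ / 2 * (1 + α * δ₀) * (δ₀ ^ 2 / 3 + v₀) with hC₀
  -- the composed random variables
  set g₁ : ℝ → ℝ := fun y => threshT (α * (y - θ₀)) with hg₁
  set g₂ : ℝ → ℝ := fun y => -threshT (α * (y - θ₀)) with hg₂
  have hcont1 : Continuous g₁ := threshT_continuous.comp (by continuity)
  have hcont2 : Continuous g₂ := hcont1.neg
  set X₁ : Fin n → Ω → ℝ := fun i => g₁ ∘ Y i with hX₁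
  set X₂ : Fin n → Ω → ℝ := fun i => g₂ ∘ Y i with hX₂
  have hX₁meas : ∀ i, Measurable (X₁ i) := fun i => hcont1.measurable.comp (hYmeas i)
  have hX₂meas : ∀ i, Measurable (X₂ i) := fun i => hcont2.measurable.comp (hYmeas i)
  have hX₁bdd : ∀ i ω, |X₁ i ω| ≤ 1 := fun i ω => abs_threshT_le _
  have hX₂bdd : ∀ i ω, |X₂ i ω| ≤ 1 := fun i ω => by
    simpa [hX₂, hg₂, abs_neg] using abs_threshT_le (α * (Y i ω - θ₀))
  have hX₁indep : iIndepFun X₁ P :=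
    hindep.comp (fun _ => g₁) (fun _ => hcont1.measurable)
  have hX₂indep : iIndepFun X₂ P :=
    hindep.comp (fun _ => g₂) (fun _ => hcont2.measurable)
  -- the mgf bounds
  set R₁ : ℝ := 1 + α * (m - θ₀) + α^2/2 * (v + (m - θ₀)^2) with hR₁
  set R₂ : ℝ := 1 + (-α) * (m - θ₀) + α^2/2 * (v + (m - θ₀)^2) with hR₂
  have hR₁eq : R₁ = 1 + t + α^2*v/2 + t^2/2 := by rw [hR₁, htdef]; ring
  have hR₂eq : R₂ = 1 + (-t) + α^2*v/2 + (-t)^2/2 := by rw [hR₂, htdef]; ring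
  have hrr : (0:ℝ) ≤ α^2*v/2 := by positivity
  have hR₁pos : 0 < R₁ := hR₁eq ▸ argpos t (α^2*v/2) hrr
  have hR₂pos : 0 < R₂ := hR₂eq ▸ argpos (-t) (α^2*v/2) hrr
  obtain ⟨hquadint₁, hquad₁⟩ := integral_quad μ hL2 m v θ₀ α (α^2/2) hm hv
  obtain ⟨hquadint₂, hquad₂⟩ := integral_quad μ hL2 m v θ₀ (-α) (α^2/2) hm hv
  have hmgf₁ : ∀ i, ∫ ω, Real.exp (X₁ i ω) ∂P ≤ R₁ := by
    intro i
    have hmap : ∫ ω, Real.exp (X₁ i ω) ∂P = ∫ y, Real.exp (g₁ y) ∂μ := by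
      have hsm : AEStronglyMeasurable (fun y => Real.exp (g₁ y)) (Measure.map (Y i) P) :=
        (Real.continuous_exp.comp hcont1).aestronglyMeasurable
      rw [← hid i, integral_map (hYmeas i).aemeasurable hsm]
      rfl
    rw [hmap]
    have hIexp : Integrable (fun y => Real.exp (g₁ y)) μ := by
      refine Integrable.mono' (integrable_const (Real.exp 1))
        (Real.continuous_exp.comp hcont1).aestronglyMeasurable ?_
      filter_upwards with y
      rw [Real.norm_eq_abs, abs_of_pos (Real.exp_pos _)]
      exact Real.exp_le_exp.mpr (abs_le.mp (abs_threshT_le _)).2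
    calc ∫ y, Real.exp (g₁ y) ∂μ
        ≤ ∫ y, (1 + α * (y - θ₀) + α^2/2 * (y - θ₀)^2) ∂μ := by
          refine integral_mono hIexp hquadint₁ (fun y => ?_)
          have h := exp_threshT_le (α * (y - θ₀))
          have : (1:ℝ) + (α*(y-θ₀)) + (α*(y-θ₀))^2/2
              = 1 + α * (y - θ₀) + α^2/2 * (y - θ₀)^2 := by ring
          rw [hg₁]; dsimp only; linarith
      _ = R₁ := by rw [hquad₁, hR₁]
  have hmgf₂ : ∀ i, ∫ ω, Real.exp (X₂ i ω) ∂P ≤ R₂ := by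
    intro i
    have hmap : ∫ ω, Real.exp (X₂ i ω) ∂P = ∫ y, Real.exp (g₂ y) ∂μ := by
      have hsm : AEStronglyMeasurable (fun y => Real.exp (g₂ y)) (Measure.map (Y i) P) :=
        (Real.continuous_exp.comp hcont2).aestronglyMeasurable
      rw [← hid i, integral_map (hYmeas i).aemeasurable hsm]
      rfl
    rw [hmap]
    have hIexp : Integrable (fun y => Real.exp (g₂ y)) μ := by
      refine Integrable.mono' (integrable_const (Real.exp 1))
        (Real.continuous_exp.comp hcont2).aestronglyMeasurable ?_
      filter_upwards with y
      rw [Real.norm_eq_abs, abs_of_pos (Real.exp_pos _)]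
      refine Real.exp_le_exp.mpr ?_
      have := (abs_le.mp (abs_threshT_le (α * (y - θ₀)))).1
      rw [hg₂]; dsimp only; linarith
    calc ∫ y, Real.exp (g₂ y) ∂μ
        ≤ ∫ y, (1 + (-α) * (y - θ₀) + α^2/2 * (y - θ₀)^2) ∂μ := by
          refine integral_mono hIexp hquadint₂ (fun y => ?_)
          have h := exp_neg_threshT_le (α * (y - θ₀))
          have : (1:ℝ) - (α*(y-θ₀)) + (α*(y-θ₀))^2/2
              = 1 + (-α) * (y - θ₀) + α^2/2 * (y - θ₀)^2 := by ring
          rw [hg₂]; dsimp only; rw [Real.exp_neg] at h ⊢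
          linarith [h]
      _ = R₂ := by rw [hquad₂, hR₂]
  -- Chernoff bounds
  have hch₁ := chernoff_aux P n X₁ hX₁meas hX₁bdd hX₁indep R₁ hR₁pos hmgf₁ ε hε0
  have hch₂ := chernoff_aux P n X₂ hX₂meas hX₂bdd hX₂indep R₂ hR₂pos hmgf₂ ε hε0
  -- the key real inequalities
  have key₁ : Real.log R₁ - t ≤ α * (α * v₀ / 2 + C₀) := by
    rw [hR₁eq]
    have := finalBound α δ₀ v₀ v t hα hδ₀ hv0 hvle hts
    rw [hC₀]; exact this
  have key₂ : Real.log R₂ - (-t) ≤ α * (α * v₀ / 2 + C₀) := by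
    rw [hR₂eq]
    have := finalBound α δ₀ v₀ v (-t) hα hδ₀ hv0 hvle (by rwa [abs_neg])
    rw [hC₀]; exact this
  -- event inclusion
  set Bad : Set Ω := {ω | (n : ℝ) * Real.log R₁ + Real.log ε⁻¹ ≤ ∑ i, X₁ i ω}
      ∪ {ω | (n : ℝ) * Real.log R₂ + Real.log ε⁻¹ ≤ ∑ i, X₂ i ω} with hBad
  have hBadm : MeasurableSet Bad := by
    refine MeasurableSet.union ?_ ?_
    · exact measurableSet_le measurable_const (Finset.measurable_sum _ (fun i _ => hX₁meas i))
    · exact measurableSet_le measurable_const (Finset.measurable_sum _ (fun i _ => hX₂meas i))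
  have hsub : Badᶜ ⊆ {ω | |thetaHat n α θ₀ (fun i => Y i ω) - m| ≤
      α * v₀ / 2 + Real.log ε⁻¹ / (n * α) + C₀} := by
    intro ω hω
    simp only [hBad, Set.mem_compl_iff, Set.mem_union, not_or, Set.mem_setOf_eq, not_le] at hω
    obtain ⟨h₁, h₂⟩ := hω
    set S : ℝ := ∑ i, threshT (α * (Y i ω - θ₀)) with hS
    have hS₁ : (∑ i, X₁ i ω) = S := by rw [hS, hX₁]; rfl
    have hS₂ : (∑ i, X₂ i ω) = -S := by
      rw [hS, hX₂]
      simp [hg₂, Function.comp]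
    rw [hS₁] at h₁
    rw [hS₂] at h₂
    have hth : thetaHat n α θ₀ (fun i => Y i ω) = θ₀ + (1/((n:ℝ)*α)) * S := by
      rw [thetaHat, hS]
    rw [Set.mem_setOf_eq, hth]
    have hn0 : (n:ℝ) ≠ 0 := hN.ne'
    have hα0 : α ≠ 0 := hα.ne'
    have hc₁ : (1/((n:ℝ)*α)) * S < Real.log R₁ / α + Real.log ε⁻¹ / ((n:ℝ)*α) := by
      have := (mul_lt_mul_of_pos_left h₁ (show (0:ℝ) < 1/((n:ℝ)*α) by positivity))
      calc (1/((n:ℝ)*α)) * S < (1/((n:ℝ)*α)) * ((n:ℝ) * Real.log R₁ + Real.log ε⁻¹) := this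
        _ = Real.log R₁ / α + Real.log ε⁻¹ / ((n:ℝ)*α) := by field_simp
    have hc₂ : -((1/((n:ℝ)*α)) * S) < Real.log R₂ / α + Real.log ε⁻¹ / ((n:ℝ)*α) := by
      have := (mul_lt_mul_of_pos_left h₂ (show (0:ℝ) < 1/((n:ℝ)*α) by positivity))
      calc -((1/((n:ℝ)*α)) * S) = (1/((n:ℝ)*α)) * (-S) := by ring
        _ < (1/((n:ℝ)*α)) * ((n:ℝ) * Real.log R₂ + Real.log ε⁻¹) := this
        _ = Real.log R₂ / α + Real.log ε⁻¹ / ((n:ℝ)*α) := by field_simp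
    have key₁' : Real.log R₁ - α*(m - θ₀) ≤ α * (α * v₀ / 2 + C₀) := by
      rw [← htdef]; exact key₁
    have key₂' : Real.log R₂ + α*(m - θ₀) ≤ α * (α * v₀ / 2 + C₀) := by
      have : Real.log R₂ - -t ≤ α * (α * v₀ / 2 + C₀) := key₂
      rw [htdef] at this; linarith
    have hlogdiv₁ : Real.log R₁ / α ≤ (m - θ₀) + (α * v₀ / 2 + C₀) := by
      rw [div_le_iff₀ hα]
      nlinarith [key₁']
    have hlogdiv₂ : Real.log R₂ / α ≤ (θ₀ - m) + (α * v₀ / 2 + C₀) := by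
      rw [div_le_iff₀ hα]
      nlinarith [key₂']
    rw [abs_le]
    constructor
    · linarith [hc₂, hlogdiv₂]
    · linarith [hc₁, hlogdiv₁]
  refine le_trans ?_ (measure_mono hsub)
  rw [prob_compl_eq_one_sub hBadm]
  apply ENNReal.le_sub_of_add_le_left (measure_ne_top P Bad)
  calc P Bad + ENNReal.ofReal (1 - 2*ε)
      ≤ (ENNReal.ofReal ε + ENNReal.ofReal ε) + ENNReal.ofReal (1 - 2*ε) := by
        exact add_le_add_left (le_trans (measure_union_le _ _) (add_le_add hch₁ hch₂)) _
    _ = ENNReal.ofReal (ε + ε + (1 - 2*ε)) := by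
        rw [← ENNReal.ofReal_add hε0.le hε0.le,
          ← ENNReal.ofReal_add (by linarith) (by linarith)]
    _ = 1 := by rw [show ε + ε + (1 - 2*ε) = 1 by ring, ENNReal.ofReal_one]
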